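/- Let u, v and \theta be elements of an L^2 space of \mathbb{R}^m-valued random variables measurable appropriately, R, \hat R symmetric positive definite m\times m matrices with \hat R = R + \bar R, and let E denote a conditional expectation. Then \mathbb{E}[\langle R\hat u + \bar R E[\hat u] + 2\theta, \hat u\rangle] = \mathbb{E}[|R^{1/2}(\hat u - E[\hat u]) + R^{-1/2}\theta|^2 + |\hat R^{1/2}E[\hat u] + \hat R^{-1/2}E[\theta]|^2 - \langle R^{-1}\theta,\theta\rangle - \langle\hat R^{-1}E[\theta],E[\theta]\rangle], where \hat u = u - v. -/

import Mathlib

open MeasureTheory Matrix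

open scoped ComplexOrder in
/-- The positive semidefinite square root of a positive semidefinite matrix
(the definition `Matrix.PosSemidef.sqrt` of the older Mathlib, since removed). -/
noncomputable def Matrix.PosSemidef.sqrt {n : Type*} [Fintype n] [DecidableEq n] {𝕜 : Type*}
    [RCLike 𝕜] {A : Matrix n n 𝕜} (hA : A.PosSemidef) : Matrix n n 𝕜 :=
  hA.1.eigenvectorUnitary.1 * diagonal ((↑) ∘ (√·) ∘ hA.1.eigenvalues) *
    (star hA.1.eigenvectorUnitary : Matrix n n 𝕜)

open scoped ComplexOrder in
lemma Matrix.PosSemidef.posSemidef_sqrt {n : Type*} [Fintype n] [DecidableEq n] {𝕜 : Type*}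
    [RCLike 𝕜] {A : Matrix n n 𝕜} (hA : A.PosSemidef) : hA.sqrt.PosSemidef := by
  unfold Matrix.PosSemidef.sqrt
  have hD : (diagonal ((↑) ∘ (√·) ∘ hA.1.eigenvalues) : Matrix n n 𝕜).PosSemidef := by
    rw [posSemidef_diagonal_iff]
    intro i
    simp only [Function.comp_apply]
    exact RCLike.ofReal_nonneg.2 (Real.sqrt_nonneg _)
  have := hD.mul_mul_conjTranspose_same (hA.1.eigenvectorUnitary.1)
  simpa [star_eq_conjTranspose] using this

open scoped ComplexOrder in
lemma Matrix.PosSemidef.sqrt_mul_self {n : Type*} [Fintype n] [DecidableEq n] {𝕜 : Type*}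
    [RCLike 𝕜] {A : Matrix n n 𝕜} (hA : A.PosSemidef) : hA.sqrt * hA.sqrt = A := by
  unfold Matrix.PosSemidef.sqrt
  set U := hA.1.eigenvectorUnitary with hUdef
  have hU : (star U : Matrix n n 𝕜) * U.1 = 1 := Unitary.coe_star_mul_self U
  have hDD : (diagonal ((↑) ∘ (√·) ∘ hA.1.eigenvalues) : Matrix n n 𝕜) *
      diagonal ((↑) ∘ (√·) ∘ hA.1.eigenvalues) = diagonal (RCLike.ofReal ∘ hA.1.eigenvalues) := by
    rw [diagonal_mul_diagonal]
    congr 1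
    funext i
    simp only [Function.comp_apply]
    rw [← RCLike.ofReal_mul, Real.mul_self_sqrt (hA.eigenvalues_nonneg i)]
  conv_rhs => rw [hA.1.spectral_theorem, Unitary.conjStarAlgAut_apply]
  rw [← hDD]
  simp only [Matrix.mul_assoc]
  congr 2
  rw [← Matrix.mul_assoc (star U : Matrix n n 𝕜), hU, Matrix.one_mul]

section OneInst
variable {α E F : Type*} {mα : MeasurableSpace α} {ν : Measure α}
  [NormedAddCommGroup E] [NormedSpace ℝ E] [CompleteSpace E]
  [NormedAddCommGroup F] [NormedSpace ℝ F] [CompleteSpace F]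

lemma my_integral_comp_comm (L : E →L[ℝ] F) {φ : α → E} (hφ : Integrable φ ν) :
    ∫ x, L (φ x) ∂ν = L (∫ x, φ x ∂ν) :=
  L.integral_comp_comm hφ

omit [NormedSpace ℝ E] [CompleteSpace E] in
lemma my_integrable_restrict {φ : α → E} (hφ : Integrable φ ν) (s : Set α) :
    Integrable φ (ν.restrict s) :=
  hφ.mono_measure Measure.restrict_le_self

omit [CompleteSpace E] in
lemma my_comp_memℒp {p : ENNReal} (L : E →L[ℝ] F) {φ : α → E} (hφ : MemLp φ p ν) :
    MemLp (fun a => L (φ a)) p ν :=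
  L.comp_memLp' hφ

end OneInst

section DotAlgebra

lemma dot_helper {k : ℕ} (A B : Matrix (Fin k) (Fin k) ℝ) (a b : Fin k → ℝ) :
    A.mulVec a ⬝ᵥ B.mulVec b = (Bᵀ * A).mulVec a ⬝ᵥ b := by
  rw [dotProduct_mulVec, ← mulVec_transpose, mulVec_mulVec]

lemma dot_sq_expand {k : ℕ} {M : Matrix (Fin k) (Fin k) ℝ} (hM : M.PosDef) (x y : Fin k → ℝ) :
    (hM.posSemidef.sqrt.mulVec x + (hM.posSemidef.sqrt)⁻¹.mulVec y) ⬝ᵥ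
      (hM.posSemidef.sqrt.mulVec x + (hM.posSemidef.sqrt)⁻¹.mulVec y)
    = M.mulVec x ⬝ᵥ x + 2 * (y ⬝ᵥ x) + M⁻¹.mulVec y ⬝ᵥ y := by
  set S := hM.posSemidef.sqrt with hSdef
  have hS : S.PosSemidef := hM.posSemidef.posSemidef_sqrt
  have hSt : Sᵀ = S := by
    have := hS.isHermitian
    simpa [Matrix.IsHermitian, conjTranspose_eq_transpose_of_trivial] using this
  have hSS : S * S = M := hM.posSemidef.sqrt_mul_self
  have hdet : IsUnit S.det := by
    have h2 : S.det * S.det = M.det := by rw [← det_mul, hSS]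
    have hMd : M.det ≠ 0 := ne_of_gt hM.det_pos
    exact isUnit_iff_ne_zero.2 fun h => hMd (by rw [← h2, h, zero_mul])
  have hSinv : S * S⁻¹ = 1 := mul_nonsing_inv S hdet
  have hSinv' : S⁻¹ * S = 1 := nonsing_inv_mul S hdet
  have hinvt : (S⁻¹)ᵀ = S⁻¹ := by rw [Matrix.transpose_nonsing_inv, hSt]
  have hMinv : S⁻¹ * S⁻¹ = M⁻¹ := by rw [← Matrix.mul_inv_rev, hSS]
  rw [dotProduct_add, add_dotProduct, add_dotProduct]
  rw [dot_helper S S x x, dot_helper S (S⁻¹) x y, dot_helper (S⁻¹) S y x,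
    dot_helper (S⁻¹) (S⁻¹) y y]
  rw [hSt, hinvt, hSS, hSinv, hSinv', hMinv, one_mulVec]
  rw [one_mulVec, dotProduct_comm x y]
  ring

lemma dot_symm {k : ℕ} {M : Matrix (Fin k) (Fin k) ℝ} (hM : Mᵀ = M) (a b : Fin k → ℝ) :
    M.mulVec a ⬝ᵥ b = M.mulVec b ⬝ᵥ a := by
  rw [dotProduct_comm, dotProduct_mulVec, ← mulVec_transpose, hM]

end DotAlgebra

section CondexpHelpers

variable {Ω : Type*} {m0 : MeasurableSpace Ω} {μ : Measure Ω} [IsProbabilityMeasure μ]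
  {𝒢 : MeasurableSpace Ω}

lemma aux_integrable_mul {f g : Ω → ℝ} (hf : MemLp f 2 μ) (hg : MemLp g 2 μ) :
    Integrable (fun ω => f ω * g ω) μ := by
  have h : MemLp (f • g) 1 μ := hg.smul hf (hpqr := ⟨by norm_num [ENNReal.inv_two_add_inv_two]⟩)
  exact h.integrable le_rfl

lemma memℒp_two_condexp (h𝒢 : 𝒢 ≤ m0) {g : Ω → ℝ} (hg : MemLp g 2 μ) :
    MemLp (μ[g|𝒢]) 2 μ := by
  haveI : SigmaFinite (μ.trim h𝒢) := (isFiniteMeasure_trim h𝒢).toSigmaFinite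
  have hae : (↑(condExpL2 ℝ ℝ h𝒢 (hg.toLp g)) : Ω → ℝ) =ᵐ[μ] μ[g|𝒢] := by
    refine ae_eq_condExp_of_forall_setIntegral_eq h𝒢 (hg.integrable one_le_two)
      (fun s _ hμs => integrableOn_condExpL2_of_measure_ne_top h𝒢 hμs.ne _)
      (fun s hs hμs => ?_)
      (aestronglyMeasurable_condExpL2 h𝒢 _)
    rw [integral_condExpL2_eq h𝒢 (hg.toLp g) hs hμs.ne]
    exact integral_congr_ae (ae_restrict_of_ae hg.coeFn_toLp)
  exact (Lp.memLp _).ae_eq hae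

lemma condexp_apply_ae (h𝒢 : 𝒢 ≤ m0) {k : ℕ} {f : Ω → Fin k → ℝ} (hf : Integrable f μ)
    (i : Fin k) :
    (fun ω => (μ[f|𝒢]) ω i) =ᵐ[μ] μ[fun ω => f ω i|𝒢] := by
  haveI : SigmaFinite (μ.trim h𝒢) := (isFiniteMeasure_trim h𝒢).toSigmaFinite
  set L : (Fin k → ℝ) →L[ℝ] ℝ := ContinuousLinearMap.proj i with hL
  have hfi : Integrable (fun ω => f ω i) μ := L.integrable_comp hf
  have hci : Integrable (fun ω => (μ[f|𝒢]) ω i) μ := L.integrable_comp integrable_condExp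
  have harg2 : AEStronglyMeasurable[𝒢] (fun ω => (μ[f|𝒢]) ω i) μ :=
    StronglyMeasurable.aestronglyMeasurable
      ((continuous_apply i).comp_stronglyMeasurable stronglyMeasurable_condExp)
  refine ae_eq_condExp_of_forall_setIntegral_eq h𝒢 hfi
    (fun s _ _ => my_integrable_restrict hci s) (fun s hs hμs => ?_) harg2
  have h1 := my_integral_comp_comm (ν := μ.restrict s) L
    (my_integrable_restrict (integrable_condExp (m := 𝒢) (f := f)) s)
  have h2 := my_integral_comp_comm (ν := μ.restrict s) L (my_integrable_restrict hf s)
  simp only [hL, ContinuousLinearMap.proj_apply] at h1 h2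
  rw [h1, setIntegral_condExp h𝒢 hf hs, ← h2]

lemma integral_mul_condexp (h𝒢 : 𝒢 ≤ m0) {f g : Ω → ℝ} (hfm : StronglyMeasurable[𝒢] f)
    (hf : MemLp f 2 μ) (hg : MemLp g 2 μ) :
    ∫ ω, f ω * g ω ∂μ = ∫ ω, f ω * (μ[g|𝒢]) ω ∂μ := by
  haveI : SigmaFinite (μ.trim h𝒢) := (isFiniteMeasure_trim h𝒢).toSigmaFinite
  have hfg : Integrable (f * g) μ := aux_integrable_mul hf hg
  have h1 : μ[f * g|𝒢] =ᵐ[μ] f * μ[g|𝒢] :=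
    condExp_mul_of_stronglyMeasurable_left hfm hfg (hg.integrable one_le_two)
  calc ∫ ω, f ω * g ω ∂μ = ∫ ω, (μ[f * g|𝒢]) ω ∂μ :=
        (integral_condExp h𝒢 (f := f * g)).symm
  _ = ∫ ω, f ω * (μ[g|𝒢]) ω ∂μ := integral_congr_ae h1

lemma memℒp_mulVec {k : ℕ} (M : Matrix (Fin k) (Fin k) ℝ) {f : Ω → Fin k → ℝ}
    (hf : ∀ i, MemLp (fun ω => f ω i) 2 μ) (i : Fin k) :
    MemLp (fun ω => M.mulVec (f ω) i) 2 μ := by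
  simp only [Matrix.mulVec, dotProduct]
  exact memLp_finset_sum _ fun j _ => (hf j).const_mul (M i j)

lemma integrable_dot {k : ℕ} {x y : Ω → Fin k → ℝ}
    (hx : ∀ i, MemLp (fun ω => x ω i) 2 μ) (hy : ∀ i, MemLp (fun ω => y ω i) 2 μ) :
    Integrable (fun ω => x ω ⬝ᵥ y ω) μ := by
  simp only [dotProduct]
  exact integrable_finset_sum _ fun i _ => aux_integrable_mul (hx i) (hy i)

lemma integral_dot_condexp (h𝒢 : 𝒢 ≤ m0) {k : ℕ} {f g : Ω → Fin k → ℝ}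
    (hfm : StronglyMeasurable[𝒢] f) (hf : ∀ i, MemLp (fun ω => f ω i) 2 μ)
    (hg : MemLp g 2 μ) :
    ∫ ω, f ω ⬝ᵥ g ω ∂μ = ∫ ω, f ω ⬝ᵥ (μ[g|𝒢]) ω ∂μ := by
  have hgi : ∀ i, MemLp (fun ω => g ω i) 2 μ := fun i =>
    my_comp_memℒp (ContinuousLinearMap.proj i) hg
  have hGi : ∀ i, MemLp (fun ω => (μ[g|𝒢]) ω i) 2 μ := fun i =>
    (memℒp_two_condexp h𝒢 (hgi i)).ae_eq (condexp_apply_ae h𝒢 (hg.integrable one_le_two) i).symm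
  have hfmi : ∀ i, StronglyMeasurable[𝒢] fun ω => f ω i := fun i =>
    (continuous_apply i).comp_stronglyMeasurable hfm
  simp only [dotProduct]
  rw [integral_finset_sum _ (fun i _ => aux_integrable_mul (hf i) (hgi i)),
      integral_finset_sum _ (fun i _ => aux_integrable_mul (hf i) (hGi i))]
  refine Finset.sum_congr rfl fun i _ => ?_
  rw [integral_mul_condexp h𝒢 (hfmi i) (hf i) (hgi i)]
  refine integral_congr_ae ?_
  filter_upwards [condexp_apply_ae h𝒢 (hg.integrable one_le_two) i] with ω hω
  rw [hω]

end CondexpHelpers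

/-- Completion of squares with a conditional expectation: with `uv = u - v`,
`R, R̂ = R + R̄ ≻ 0`, and `E = 𝔼[·|𝒢]`,
`𝔼⟨Ruv + R̄E[uv] + 2θ, uv⟩ = 𝔼[|R^{1/2}(uv-E[uv]) + R^{-1/2}θ|²
 + |R̂^{1/2}E[uv] + R̂^{-1/2}E[θ]|² - ⟨R⁻¹θ,θ⟩ - ⟨R̂⁻¹E[θ],E[θ]⟩]`. -/
theorem completion_of_squares_condexp {m : ℕ}
    {Ω : Type*} {m0 : MeasurableSpace Ω} (μ : Measure Ω) [IsProbabilityMeasure μ]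
    (𝒢 : MeasurableSpace Ω) (h𝒢 : 𝒢 ≤ m0)
    (u v θ : Ω → Fin m → ℝ)
    (hu : MemLp u 2 μ) (hv : MemLp v 2 μ) (hθ : MemLp θ 2 μ)
    (R Rbar Rhat : Matrix (Fin m) (Fin m) ℝ)
    (hRhat : Rhat = R + Rbar)
    (hR : R.PosDef) (hRhatpos : Rhat.PosDef) :
    (∫ ω, (R.mulVec (u ω - v ω)
        + Rbar.mulVec ((μ[(fun ω => u ω - v ω)|𝒢]) ω)
        + (2 : ℝ) • θ ω) ⬝ᵥ (u ω - v ω) ∂μ)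
    =
    ∫ ω,
      ((hR.posSemidef.sqrt.mulVec (u ω - v ω - (μ[(fun ω => u ω - v ω)|𝒢]) ω)
          + (hR.posSemidef.sqrt)⁻¹.mulVec (θ ω)) ⬝ᵥ
        (hR.posSemidef.sqrt.mulVec (u ω - v ω - (μ[(fun ω => u ω - v ω)|𝒢]) ω)
          + (hR.posSemidef.sqrt)⁻¹.mulVec (θ ω))
      + (hRhatpos.posSemidef.sqrt.mulVec ((μ[(fun ω => u ω - v ω)|𝒢]) ω)
          + (hRhatpos.posSemidef.sqrt)⁻¹.mulVec ((μ[θ|𝒢]) ω)) ⬝ᵥ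
        (hRhatpos.posSemidef.sqrt.mulVec ((μ[(fun ω => u ω - v ω)|𝒢]) ω)
          + (hRhatpos.posSemidef.sqrt)⁻¹.mulVec ((μ[θ|𝒢]) ω))
      - R⁻¹.mulVec (θ ω) ⬝ᵥ θ ω
      - Rhat⁻¹.mulVec ((μ[θ|𝒢]) ω) ⬝ᵥ (μ[θ|𝒢]) ω) ∂μ := by
  haveI : SigmaFinite (μ.trim h𝒢) := (isFiniteMeasure_trim h𝒢).toSigmaFinite
  set uv : Ω → Fin m → ℝ := fun ω => u ω - v ω with huvdef
  have hsub : ∀ ω, u ω - v ω = uv ω := fun _ => rfl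
  simp only [hsub]
  set A : Ω → Fin m → ℝ := μ[uv|𝒢] with hAdef
  set B : Ω → Fin m → ℝ := μ[θ|𝒢] with hBdef
  -- basic regularity
  have huv2 : MemLp uv 2 μ := hu.sub hv
  have huvi : ∀ i, MemLp (fun ω => uv ω i) 2 μ := fun i =>
    my_comp_memℒp (ContinuousLinearMap.proj i) huv2
  have hθi : ∀ i, MemLp (fun ω => θ ω i) 2 μ := fun i =>
    my_comp_memℒp (ContinuousLinearMap.proj i) hθ
  have hAi : ∀ i, MemLp (fun ω => A ω i) 2 μ := fun i =>
    (memℒp_two_condexp h𝒢 (huvi i)).ae_eq (condexp_apply_ae h𝒢 (huv2.integrable one_le_two) i).symm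
  have hBi : ∀ i, MemLp (fun ω => B ω i) 2 μ :=  fun i =>
    (memℒp_two_condexp h𝒢 (hθi i)).ae_eq (condexp_apply_ae h𝒢 (hθ.integrable one_le_two) i).symm
  have hAm : StronglyMeasurable[𝒢] A := stronglyMeasurable_condExp
  have huvAi : ∀ i, MemLp (fun ω => (uv ω - A ω) i) 2 μ := fun i => (huvi i).sub (hAi i)
  have hθBi : ∀ i, MemLp (fun ω => (θ ω - B ω) i) 2 μ := fun i => (hθi i).sub (hBi i)
  -- the symmetric matrix R
  have hRt : Rᵀ = R := by
    have := hR.isHermitian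
    simpa [Matrix.IsHermitian, conjTranspose_eq_transpose_of_trivial] using this
  -- pointwise algebra: LHS integrand = g₀ + correction
  have key : ∀ ω, (R.mulVec (uv ω) + Rbar.mulVec (A ω) + (2 : ℝ) • θ ω) ⬝ᵥ uv ω
      = (R.mulVec (uv ω - A ω) ⬝ᵥ (uv ω - A ω) + 2 * (θ ω ⬝ᵥ (uv ω - A ω))
          + Rhat.mulVec (A ω) ⬝ᵥ A ω + 2 * (B ω ⬝ᵥ A ω))
        + ((Rbar + (2 : ℝ) • R).mulVec (A ω) ⬝ᵥ (uv ω - A ω)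
          + 2 * (A ω ⬝ᵥ (θ ω - B ω))) := by
    intro ω
    have e1 := dot_symm hRt (uv ω) (A ω)
    have e2 := dotProduct_comm (θ ω) (A ω)
    have e3 := dotProduct_comm (B ω) (A ω)
    simp only [hRhat, Matrix.add_mulVec, Matrix.mulVec_sub, Matrix.smul_mulVec,
      add_dotProduct, sub_dotProduct, dotProduct_add, dotProduct_sub, smul_dotProduct,
      dotProduct_smul, smul_eq_mul] at *
    linarith
  -- pointwise algebra: RHS integrand = g₀
  have hRHSpt : ∀ ω,
      ((hR.posSemidef.sqrt.mulVec (uv ω - A ω) + (hR.posSemidef.sqrt)⁻¹.mulVec (θ ω)) ⬝ᵥ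
        (hR.posSemidef.sqrt.mulVec (uv ω - A ω) + (hR.posSemidef.sqrt)⁻¹.mulVec (θ ω))
      + (hRhatpos.posSemidef.sqrt.mulVec (A ω) + (hRhatpos.posSemidef.sqrt)⁻¹.mulVec (B ω)) ⬝ᵥ
        (hRhatpos.posSemidef.sqrt.mulVec (A ω) + (hRhatpos.posSemidef.sqrt)⁻¹.mulVec (B ω))
      - R⁻¹.mulVec (θ ω) ⬝ᵥ θ ω
      - Rhat⁻¹.mulVec (B ω) ⬝ᵥ B ω)
      = R.mulVec (uv ω - A ω) ⬝ᵥ (uv ω - A ω) + 2 * (θ ω ⬝ᵥ (uv ω - A ω))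
          + Rhat.mulVec (A ω) ⬝ᵥ A ω + 2 * (B ω ⬝ᵥ A ω) := by
    intro ω
    rw [dot_sq_expand hR, dot_sq_expand hRhatpos]
    ring
  -- integrability of the pieces
  have hg1 : Integrable (fun ω => R.mulVec (uv ω - A ω) ⬝ᵥ (uv ω - A ω)) μ :=
    integrable_dot (fun i => memℒp_mulVec R huvAi i) huvAi
  have hg2 : Integrable (fun ω => θ ω ⬝ᵥ (uv ω - A ω)) μ := integrable_dot hθi huvAi
  have hg3 : Integrable (fun ω => Rhat.mulVec (A ω) ⬝ᵥ A ω) μ :=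
    integrable_dot (fun i => memℒp_mulVec Rhat hAi i) hAi
  have hg4 : Integrable (fun ω => B ω ⬝ᵥ A ω) μ := integrable_dot hBi hAi
  have hg0 : Integrable (fun ω => R.mulVec (uv ω - A ω) ⬝ᵥ (uv ω - A ω)
      + 2 * (θ ω ⬝ᵥ (uv ω - A ω)) + Rhat.mulVec (A ω) ⬝ᵥ A ω + 2 * (B ω ⬝ᵥ A ω)) μ :=
    (((hg1.add (hg2.const_mul 2)).add hg3).add (hg4.const_mul 2))
  have hc1 : Integrable (fun ω => (Rbar + (2 : ℝ) • R).mulVec (A ω) ⬝ᵥ (uv ω - A ω)) μ :=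
    integrable_dot (fun i => memℒp_mulVec (Rbar + (2 : ℝ) • R) hAi i) huvAi
  have hc2 : Integrable (fun ω => A ω ⬝ᵥ (θ ω - B ω)) μ := integrable_dot hAi hθBi
  have hcorr : Integrable (fun ω => (Rbar + (2 : ℝ) • R).mulVec (A ω) ⬝ᵥ (uv ω - A ω)
      + 2 * (A ω ⬝ᵥ (θ ω - B ω))) μ := hc1.add (hc2.const_mul 2)
  -- the correction integrates to zero
  have hcm : StronglyMeasurable[𝒢] fun ω => (Rbar + (2 : ℝ) • R).mulVec (A ω) := by
    have hcont : Continuous fun w : Fin m → ℝ => (Rbar + (2 : ℝ) • R).mulVec w := by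
      have heq : (fun w : Fin m → ℝ => (Rbar + (2 : ℝ) • R).mulVec w)
          = ⇑(Matrix.mulVecLin (Rbar + (2 : ℝ) • R)) := by
        ext w i; rw [Matrix.mulVecLin_apply]
      rw [heq]
      exact LinearMap.continuous_of_finiteDimensional _
    exact hcont.comp_stronglyMeasurable hAm
  have hzero1 : ∫ ω, (Rbar + (2 : ℝ) • R).mulVec (A ω) ⬝ᵥ (uv ω - A ω) ∂μ = 0 := by
    have hsplit : ∀ ω, (Rbar + (2 : ℝ) • R).mulVec (A ω) ⬝ᵥ (uv ω - A ω)
        = (Rbar + (2 : ℝ) • R).mulVec (A ω) ⬝ᵥ uv ω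
          - (Rbar + (2 : ℝ) • R).mulVec (A ω) ⬝ᵥ A ω := fun ω => dotProduct_sub _ _ _
    rw [integral_congr_ae (Filter.Eventually.of_forall hsplit),
      integral_sub (integrable_dot (fun i => memℒp_mulVec _ hAi i) huvi)
        (integrable_dot (fun i => memℒp_mulVec _ hAi i) hAi)]
    have := integral_dot_condexp h𝒢 hcm (fun i => memℒp_mulVec (Rbar + (2 : ℝ) • R) hAi i) huv2
    rw [← hAdef] at this
    rw [this, sub_self]
  have hzero2 : ∫ ω, A ω ⬝ᵥ (θ ω - B ω) ∂μ = 0 := by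
    have hsplit : ∀ ω, A ω ⬝ᵥ (θ ω - B ω) = A ω ⬝ᵥ θ ω - A ω ⬝ᵥ B ω :=
      fun ω => dotProduct_sub _ _ _
    rw [integral_congr_ae (Filter.Eventually.of_forall hsplit),
      integral_sub (integrable_dot hAi hθi) (integrable_dot hAi hBi)]
    have := integral_dot_condexp h𝒢 hAm hAi hθ
    rw [← hBdef] at this
    rw [this, sub_self]
  have hcorr0 : ∫ ω, ((Rbar + (2 : ℝ) • R).mulVec (A ω) ⬝ᵥ (uv ω - A ω)
      + 2 * (A ω ⬝ᵥ (θ ω - B ω))) ∂μ = 0 := by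
    rw [integral_add hc1 (hc2.const_mul 2), integral_const_mul 2, hzero1, hzero2]
    ring
  -- put it together
  calc ∫ ω, (R.mulVec (uv ω) + Rbar.mulVec (A ω) + (2 : ℝ) • θ ω) ⬝ᵥ uv ω ∂μ
      = ∫ ω, ((R.mulVec (uv ω - A ω) ⬝ᵥ (uv ω - A ω) + 2 * (θ ω ⬝ᵥ (uv ω - A ω))
          + Rhat.mulVec (A ω) ⬝ᵥ A ω + 2 * (B ω ⬝ᵥ A ω))
        + ((Rbar + (2 : ℝ) • R).mulVec (A ω) ⬝ᵥ (uv ω - A ω)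
          + 2 * (A ω ⬝ᵥ (θ ω - B ω)))) ∂μ :=
        integral_congr_ae (Filter.Eventually.of_forall key)
  _ = (∫ ω, (R.mulVec (uv ω - A ω) ⬝ᵥ (uv ω - A ω) + 2 * (θ ω ⬝ᵥ (uv ω - A ω))
          + Rhat.mulVec (A ω) ⬝ᵥ A ω + 2 * (B ω ⬝ᵥ A ω)) ∂μ)
      + ∫ ω, ((Rbar + (2 : ℝ) • R).mulVec (A ω) ⬝ᵥ (uv ω - A ω)
          + 2 * (A ω ⬝ᵥ (θ ω - B ω))) ∂μ := integral_add hg0 hcorr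
  _ = ∫ ω, (R.mulVec (uv ω - A ω) ⬝ᵥ (uv ω - A ω) + 2 * (θ ω ⬝ᵥ (uv ω - A ω))
          + Rhat.mulVec (A ω) ⬝ᵥ A ω + 2 * (B ω ⬝ᵥ A ω)) ∂μ := by
        rw [hcorr0, add_zero]
  _ = _ := integral_congr_ae (Filter.Eventually.of_forall fun ω => (hRHSpt ω).symm)
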